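/- Let q ≥ 3 and let ∇ ∈ ℝ^{p×n} be the discrete gradient operator of the 3-dimensional regular grid graph on V = {0,…,q−1}³, with n = q³ and p = 3q²(q−1). Let ℓ be an integer with 54 < ℓ ≤ p and let m ∈ ℕ satisfy m ≥ n − (1/3)(ℓ + (3ℓ²)^{1/3} + 2(ℓ/3)^{1/3} − 2). Then κ_∇(ℓ) ≤ m; that is, the number of measurements m meets the necessary and sufficient condition of the known-cosupport uniqueness criterion. -/

import Mathlib

open Finset


/-- Base-`q` encoding of a grid point, used to orient the edges of the grid graph. -/
def enc (q d : ℕ) (v : Fin d → Fin q) : ℕ := ∑ i : Fin d, q ^ (i : ℕ) * (v i : ℕ)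

/-- The (oriented) edges of the regular grid graph on `{0,…,q−1}^d`: pairs of vertices at
ℓ1-distance 1, canonically oriented. They index the rows of the discrete gradient. -/
abbrev OEdge (q d : ℕ) : Type :=
  {e : (Fin d → Fin q) × (Fin d → Fin q) //
    (∑ i, |(e.1 i : ℤ) - (e.2 i : ℤ)|) = 1 ∧ enc q d e.1 < enc q d e.2}

/-- The discrete gradient operator of the regular grid graph: one row per edge
`e = (v₁, v₂)`, with entry `−1` in the column of `v₁`, `+1` in the column of `v₂`. -/
def grad (q d : ℕ) : Matrix (OEdge q d) (Fin d → Fin q) ℝ :=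
  Matrix.of fun e v => if v = e.1.2 then 1 else if v = e.1.1 then -1 else 0

/-- `W_Λ`: the nullspace of the rows of the discrete gradient indexed by `Λ`. -/
noncomputable def Wgrad (q d : ℕ) (Λ : Finset (OEdge q d)) :
    Submodule ℝ ((Fin d → Fin q) → ℝ) :=
  ⨅ e ∈ Λ, LinearMap.ker
    ((LinearMap.proj e : (OEdge q d → ℝ) →ₗ[ℝ] ℝ) ∘ₗ (grad q d).mulVecLin)

/-- `κ_∇(ℓ) = max{dim W_Λ : Λ ⊆ E, |Λ| ≥ ℓ}` for the discrete gradient of the grid. -/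
noncomputable def kappaGrad (q d ℓ : ℕ) : ℕ :=
  (Finset.univ.filter (fun Λ : Finset (OEdge q d) => ℓ ≤ Λ.card)).sup
    (fun Λ => Module.finrank ℝ (Wgrad q d Λ))

/-- `G k = 3k - 3k^(2/3)`: max number of grid edges on `k` vertices. -/
noncomputable def Gfun (x : ℝ) : ℝ := 3 * x - 3 * x ^ ((2:ℝ)/3)

lemma rpow_submodular {a b : ℝ} (ha : 1 ≤ a) (hb : 1 ≤ b) :
    (a + b - 1) ^ ((2:ℝ)/3) + 1 ≤ a ^ ((2:ℝ)/3) + b ^ ((2:ℝ)/3) := by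
  have hC := Real.concaveOn_rpow (by norm_num : (0:ℝ) ≤ 2/3) (by norm_num : (2:ℝ)/3 ≤ 1)
  set u := a - 1 with hu
  set w := b - 1 with hw
  have hu0 : 0 ≤ u := by rw [hu]; linarith
  have hw0 : 0 ≤ w := by rw [hw]; linarith
  rcases eq_or_lt_of_le (add_nonneg hu0 hw0) with h | h
  · have ha' : a = 1 := by rw [hu] at *; linarith
    have hb' : b = 1 := by rw [hw] at *; linarith
    simp [ha', hb', Real.one_rpow]
  · set s := u + w with hs
    set lam := u / s with hlam
    have hlam0 : 0 ≤ lam := div_nonneg hu0 h.le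
    have hlam1 : lam ≤ 1 := by
      rw [hlam, div_le_one h]; linarith
    have h1mem : (1:ℝ) ∈ Set.Ici (0:ℝ) := by norm_num
    have h2mem : (1 + s) ∈ Set.Ici (0:ℝ) := by simp [Set.mem_Ici]; linarith
    have hA := hC.2 h1mem h2mem (by linarith : 0 ≤ 1 - lam) hlam0 (by ring)
    have hB := hC.2 h1mem h2mem hlam0 (by linarith : 0 ≤ 1 - lam) (by ring)
    have hls : lam * s = u := div_mul_cancel₀ u h.ne'
    have hxa : (1 - lam) • (1:ℝ) + lam • (1 + s) = a := by
      simp only [smul_eq_mul]; linear_combination hls + hu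
    have hxb : lam • (1:ℝ) + (1 - lam) • (1 + s) = b := by
      simp only [smul_eq_mul]; linear_combination (-1 : ℝ) * hls + hs + hw
    rw [hxa] at hA
    rw [hxb] at hB
    simp only [smul_eq_mul, Real.one_rpow] at hA hB
    have hab1 : a + b - 1 = 1 + s := by simp [hs, hu, hw]; ring
    rw [hab1]
    nlinarith [hA, hB]

lemma Gfun_pair {a b : ℝ} (ha : 1 ≤ a) (hb : 1 ≤ b) :
    Gfun a + Gfun b ≤ Gfun (a + b - 1) := by
  have := rpow_submodular ha hb
  simp only [Gfun]; nlinarith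

lemma Gfun_mono {x y : ℝ} (hx : 1 ≤ x) (hxy : x ≤ y) : Gfun x ≤ Gfun y := by
  have hx0 : (0:ℝ) < x := by linarith
  have hy0 : (0:ℝ) ≤ y := by linarith
  have hr : (1:ℝ) ≤ y / x := (one_le_div hx0).2 hxy
  have h1 : (y / x) ^ ((2:ℝ)/3) ≤ y / x := by
    calc (y / x) ^ ((2:ℝ)/3) ≤ (y / x) ^ (1:ℝ) :=
          Real.rpow_le_rpow_of_exponent_le hr (by norm_num)
      _ = y / x := Real.rpow_one _
  have h2 : y ^ ((2:ℝ)/3) = x ^ ((2:ℝ)/3) * (y / x) ^ ((2:ℝ)/3) := by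
    rw [← Real.mul_rpow hx0.le (by positivity)]
    rw [mul_div_cancel₀ _ hx0.ne']
  have h3 : y ^ ((2:ℝ)/3) * x ≤ x ^ ((2:ℝ)/3) * y := by
    rw [h2]
    have := mul_le_mul_of_nonneg_left h1 (Real.rpow_nonneg hx0.le ((2:ℝ)/3))
    calc x ^ ((2:ℝ)/3) * (y / x) ^ ((2:ℝ)/3) * x ≤ x ^ ((2:ℝ)/3) * (y / x) * x := by
          nlinarith [hx0]
      _ = x ^ ((2:ℝ)/3) * y := by field_simp
  have h4 : x ^ ((2:ℝ)/3) ≤ x := by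
    calc x ^ ((2:ℝ)/3) ≤ x ^ (1:ℝ) := Real.rpow_le_rpow_of_exponent_le hx (by norm_num)
      _ = x := Real.rpow_one _
  simp only [Gfun]
  nlinarith [mul_le_mul_of_nonneg_right h4 (by linarith : (0:ℝ) ≤ y - x)]

lemma Gfun_agg {ι : Type*} (T : Finset ι) (hT : T.Nonempty) (k e : ι → ℝ)
    (hk : ∀ a ∈ T, 1 ≤ k a) (he : ∀ a ∈ T, e a ≤ Gfun (k a)) :
    ∑ a ∈ T, e a ≤ Gfun (∑ a ∈ T, (k a - 1) + 1) := by
  classical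
  induction T using Finset.cons_induction with
  | empty => exact absurd hT (by simp)
  | cons a T haT ih =>
    rcases T.eq_empty_or_nonempty with rfl | hTne
    · simp only [Finset.sum_cons, Finset.sum_empty, add_zero, zero_add]
      have h1 : k a - 1 + 1 = k a := by ring
      rw [h1]; exact he a (by simp)
    · have hka := hk a (by simp)
      have hsum1 : (1:ℝ) ≤ ∑ b ∈ T, (k b - 1) + 1 := by
        have : (0:ℝ) ≤ ∑ b ∈ T, (k b - 1) :=
          Finset.sum_nonneg fun b hb => by
            have := hk b (Finset.mem_cons_of_mem hb); linarith
        linarith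
      have hrec := ih hTne (fun b hb => hk b (Finset.mem_cons_of_mem hb))
        (fun b hb => he b (Finset.mem_cons_of_mem hb))
      calc ∑ b ∈ Finset.cons a T haT, e b = e a + ∑ b ∈ T, e b := Finset.sum_cons _
        _ ≤ Gfun (k a) + Gfun (∑ b ∈ T, (k b - 1) + 1) := by
            have := he a (by simp); linarith
        _ ≤ Gfun (k a + (∑ b ∈ T, (k b - 1) + 1) - 1) := Gfun_pair hka hsum1
        _ = Gfun (∑ b ∈ Finset.cons a T haT, (k b - 1) + 1) := by
            congr 1; rw [Finset.sum_cons]; ring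

lemma Gfun_core {ℓ : ℕ} (hl : 54 < ℓ) :
    Gfun ((1/3) * ((ℓ:ℝ) + (3 * (ℓ:ℝ) ^ 2) ^ ((1:ℝ)/3) +
      2 * ((ℓ:ℝ) / 3) ^ ((1:ℝ)/3) - 2)) < ℓ := by
  have hl0 : (0:ℝ) ≤ (ℓ:ℝ) / 3 := by positivity
  set t : ℝ := ((ℓ:ℝ) / 3) ^ ((1:ℝ)/3) with htdef
  have ht0 : 0 ≤ t := Real.rpow_nonneg hl0 _
  have ht3 : t ^ (3:ℕ) = (ℓ:ℝ) / 3 := by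
    rw [htdef, show ((1:ℝ)/3) = (((3:ℕ):ℝ))⁻¹ by norm_num]
    exact Real.rpow_inv_natCast_pow hl0 (by norm_num)
  have hl3 : (ℓ:ℝ) = 3 * t ^ 3 := by rw [ht3]; ring
  have hl55 : (55:ℝ) ≤ (ℓ:ℝ) := by exact_mod_cast Nat.cast_le.2 (by omega : 55 ≤ ℓ)
  have ht1 : 1 ≤ t := by
    by_contra hc
    push_neg at hc
    have h1 : t ^ 3 ≤ 1 := pow_le_one₀ ht0 hc.le
    rw [ht3] at h1
    linarith
  have h2t : 1 ≤ t ^ 2 := one_le_pow₀ ht1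
  have h3t : 1 ≤ t ^ 3 := one_le_pow₀ ht1
  have e1 : t ^ 2 ≤ t ^ 4 := by nlinarith
  have e2 : t ≤ t ^ 3 := by nlinarith
  have h2 : (3 * (ℓ:ℝ) ^ 2) ^ ((1:ℝ)/3) = 3 * t ^ 2 := by
    have h27 : 3 * (ℓ:ℝ) ^ 2 = 27 * ((ℓ:ℝ)/3) ^ 2 := by ring
    rw [h27, Real.mul_rpow (by norm_num) (by positivity)]
    have ha : (27:ℝ) ^ ((1:ℝ)/3) = 3 := by
      rw [show (27:ℝ) = 3 ^ (3:ℕ) by norm_num,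
        show ((1:ℝ)/3) = (((3:ℕ):ℝ))⁻¹ by norm_num]
      exact Real.pow_rpow_inv_natCast (by norm_num) (by norm_num)
    have hb : (((ℓ:ℝ)/3) ^ 2) ^ ((1:ℝ)/3) = t ^ 2 := by
      rw [htdef, ← Real.rpow_natCast ((ℓ:ℝ)/3) 2, ← Real.rpow_mul hl0,
        ← Real.rpow_natCast (((ℓ:ℝ)/3) ^ ((1:ℝ)/3)) 2, ← Real.rpow_mul hl0]
      norm_num
    rw [ha, hb]
  have hF : (1/3) * ((ℓ:ℝ) + (3 * (ℓ:ℝ) ^ 2) ^ ((1:ℝ)/3) +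
      2 * ((ℓ:ℝ) / 3) ^ ((1:ℝ)/3) - 2) = t^3 + t^2 + (2/3) * t - 2/3 := by
    rw [h2, ← htdef, hl3]; ring
  rw [hF]
  have hF0 : (0:ℝ) ≤ t^3 + t^2 + (2/3) * t - 2/3 := by nlinarith
  set F : ℝ := t^3 + t^2 + (2/3) * t - 2/3 with hFdef
  have hkey : 3 * t^2 + 2 * t - 2 < 3 * F ^ ((2:ℝ)/3) := by
    by_contra hc
    push_neg at hc
    set c : ℝ := F ^ ((2:ℝ)/3) with hcdef
    have hc0 : 0 ≤ c := Real.rpow_nonneg hF0 _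
    have hc3 : c ^ (3:ℕ) = F ^ (2:ℕ) := by
      rw [hcdef, ← Real.rpow_natCast (F ^ ((2:ℝ)/3)) 3, ← Real.rpow_mul hF0,
        ← Real.rpow_natCast F 2]
      norm_num
    have hcc : (3*c) ^ (3:ℕ) ≤ (3 * t^2 + 2*t - 2) ^ (3:ℕ) :=
      pow_le_pow_left₀ (by linarith) (by linarith) 3
    have hexp : (3*c) ^ (3:ℕ) = 27 * F ^ (2:ℕ) := by rw [mul_pow, hc3]; norm_num
    rw [hexp, hFdef] at hcc
    nlinarith [hcc, e1, e2, h2t, h3t, ht1]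
  have hG : Gfun F = 3 * F - 3 * F ^ ((2:ℝ)/3) := rfl
  rw [hG, hl3, hFdef]
  nlinarith [hkey]

/-- projection killing coordinate i -/
def pr {q : ℕ} [NeZero q] (i : Fin 3) (v : Fin 3 → Fin q) : Fin 3 → Fin q :=
  Function.update v i 0

lemma pr_apply_ne {q : ℕ} [NeZero q] (i j : Fin 3) (v : Fin 3 → Fin q) (h : j ≠ i) :
    pr i v j = v j := Function.update_of_ne h _ _

lemma pr_eq_iff {q : ℕ} [NeZero q] {i : Fin 3} {v w : Fin 3 → Fin q} :
    pr i v = pr i w ↔ ∀ j, j ≠ i → v j = w j := by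
  constructor
  · intro h j hj
    have := congrFun h j
    rwa [pr_apply_ne i j v hj, pr_apply_ne i j w hj] at this
  · intro h
    funext j
    by_cases hj : j = i
    · subst hj; simp [pr]
    · rw [pr_apply_ne i j v hj, pr_apply_ne i j w hj]; exact h j hj

/-- enc is monotone along lines -/
lemma enc_lt_of {q : ℕ} (a b : Fin 3 → Fin q) (i : Fin 3)
    (hi : (b i : ℕ) < (a i : ℕ)) (hj : ∀ j, j ≠ i → a j = b j) :
    enc q 3 b < enc q 3 a := by
  have hq : 0 < q := (a 0).pos
  unfold enc
  refine Finset.sum_lt_sum (fun j _ => ?_) ⟨i, Finset.mem_univ i, ?_⟩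
  · by_cases h : j = i
    · subst h
      exact Nat.mul_le_mul_left _ hi.le
    · rw [hj j h]
  · exact Nat.mul_lt_mul_of_le_of_lt (le_refl _) hi (Nat.pow_pos hq)

/-- structure of an oriented grid edge: there is a unique direction `i` where the
second endpoint exceeds the first by one; other coordinates agree. -/
lemma edge_struct {q : ℕ} (e : OEdge q 3) : ∃ i : Fin 3,
    ((e.1.2 i : ℤ) = (e.1.1 i : ℤ) + 1) ∧ ∀ j, j ≠ i → e.1.1 j = e.1.2 j := by
  obtain ⟨hsum, henc⟩ := e.2
  set a := e.1.1 with hadef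
  set b := e.1.2 with hbdef
  rw [Fin.sum_univ_three] at hsum
  have key : ∀ j : Fin 3, ((a j : ℤ) - b j = 0 → a j = b j) := by
    intro j h
    have : (a j : ℕ) = (b j : ℕ) := by omega
    exact Fin.ext this
  have habs : ∀ j : Fin 3, 0 ≤ |(a j : ℤ) - b j| := fun j => abs_nonneg _
  have hcases : (|(a 0 : ℤ) - b 0| = 1 ∧ |(a 1 : ℤ) - b 1| = 0 ∧ |(a 2 : ℤ) - b 2| = 0) ∨
      (|(a 0 : ℤ) - b 0| = 0 ∧ |(a 1 : ℤ) - b 1| = 1 ∧ |(a 2 : ℤ) - b 2| = 0) ∨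
      (|(a 0 : ℤ) - b 0| = 0 ∧ |(a 1 : ℤ) - b 1| = 0 ∧ |(a 2 : ℤ) - b 2| = 1) := by
    have h0 := habs 0; have h1 := habs 1; have h2 := habs 2
    omega
  have hup : ∀ j : Fin 3, |(a j : ℤ) - b j| = 1 → (∀ i, i ≠ j → a i = b i) →
      ((b j : ℤ) = (a j : ℤ) + 1 ∧ ∀ i, i ≠ j → a i = b i) := by
    intro j hj heq
    rcases (abs_eq (by norm_num : (0:ℤ) ≤ 1)).1 hj with h | h
    · exfalso
      have hjn : (b j : ℕ) < (a j : ℕ) := by omega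
      exact absurd henc (not_lt.2 (enc_lt_of a b j hjn heq).le)
    · exact ⟨by omega, heq⟩
  rcases hcases with ⟨h0, h1, h2⟩ | ⟨h0, h1, h2⟩ | ⟨h0, h1, h2⟩
  · refine ⟨0, hup 0 h0 ?_⟩
    intro i hi
    fin_cases i
    · exact absurd rfl hi
    · exact key 1 (by rw [← abs_eq_zero]; exact h1)
    · exact key 2 (by rw [← abs_eq_zero]; exact h2)
  · refine ⟨1, hup 1 h1 ?_⟩
    intro i hi
    fin_cases i
    · exact key 0 (by rw [← abs_eq_zero]; exact h0)
    · exact absurd rfl hi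
    · exact key 2 (by rw [← abs_eq_zero]; exact h2)
  · refine ⟨2, hup 2 h2 ?_⟩
    intro i hi
    fin_cases i
    · exact key 0 (by rw [← abs_eq_zero]; exact h0)
    · exact key 1 (by rw [← abs_eq_zero]; exact h1)
    · exact absurd rfl hi

lemma eq_of_pr_eq {q : ℕ} [NeZero q] {i : Fin 3} {v w : Fin 3 → Fin q}
    (h : pr i v = pr i w) (hi : v i = w i) : v = w := by
  funext j
  by_cases hj : j = i
  · subst hj; exact hi
  · exact pr_eq_iff.1 h j hj

/-- line counting: if every edge of `E` points in direction `i` and has both endpoints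
in `S`, then `|E| + |pr_i(S)| ≤ |S|`. -/
lemma dir_count {q : ℕ} [NeZero q] {ι : Type*} [DecidableEq ι] (S : Finset (Fin 3 → Fin q))
    (E : Finset ι) (i : Fin 3) (lo hi : ι → (Fin 3 → Fin q))
    (hE : ∀ e ∈ E, lo e ∈ S ∧ hi e ∈ S ∧ ((hi e) i : ℕ) = ((lo e) i : ℕ) + 1 ∧
      pr i (lo e) = pr i (hi e))
    (hinj : ∀ e ∈ E, ∀ e' ∈ E, lo e = lo e' → e = e') :
    E.card + (S.image (pr i)).card ≤ S.card := by
  classical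
  set T : Finset (Fin 3 → Fin q) :=
    S.filter (fun v => ∀ w ∈ S, pr i w = pr i v → (w i : ℕ) ≤ (v i : ℕ)) with hT
  have hTsub : T ⊆ S := filter_subset _ _
  -- image card ≤ T card
  have himg : (S.image (pr i)).card ≤ T.card := by
    apply Finset.card_le_card_of_surjOn (pr i)
    intro c hc
    simp only [coe_image, Set.mem_image, mem_coe] at hc
    obtain ⟨v, hv, hvc⟩ := hc
    obtain ⟨w, hw, hwmax⟩ := Finset.exists_max_image
      (S.filter (fun u => pr i u = pr i v)) (fun u => (u i : ℕ))
      ⟨v, by simp [hv]⟩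
    simp only [mem_filter] at hw
    refine ⟨w, ?_, by rw [hw.2, hvc]⟩
    rw [Finset.mem_coe, hT, mem_filter]
    exact ⟨hw.1, fun u hu hpu => hwmax u (by simp [mem_filter, hu, hpu, hw.2])⟩
  -- E injects into S \ T
  have hET : E.card ≤ (S \ T).card := by
    apply Finset.card_le_card_of_injOn lo
    · intro e he
      obtain ⟨h1, h2, h3, h4⟩ := hE e he
      simp only [mem_coe, mem_sdiff]
      refine ⟨h1, fun hmem => ?_⟩
      rw [hT, mem_filter] at hmem
      have := hmem.2 (hi e) h2 h4.symm
      omega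
    · intro e he e' he' hee
      exact hinj e (by simpa using he) e' (by simpa using he') hee
  have hcard : (S \ T).card = S.card - T.card := card_sdiff_of_subset hTsub
  have := card_le_card hTsub
  omega

/-- discrete Loomis–Whitney inequality for subsets of the 3-dimensional grid. -/
lemma loomis_whitney {q : ℕ} [NeZero q] (S : Finset (Fin 3 → Fin q)) :
    ((S.card : ℝ)) ^ 2 ≤ ((S.image (pr 0)).card : ℝ) *
      ((S.image (pr 1)).card : ℝ) * ((S.image (pr 2)).card : ℝ) := by
  classical
  set Sx : Fin q → Finset (Fin 3 → Fin q) := fun x => S.filter (fun v => v 0 = x) with hSx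
  have hcard : S.card = ∑ x : Fin q, (Sx x).card :=
    Finset.card_eq_sum_card_fiberwise (fun v _ => mem_univ (v 0))
  set P0 := (S.image (pr 0)).card with hP0
  set b : Fin q → ℕ := fun x => ((Sx x).image (pr 1)).card with hb
  set c : Fin q → ℕ := fun x => ((Sx x).image (pr 2)).card with hc
  -- slice bounds
  have hslice0 : ∀ x, (Sx x).card ≤ P0 := by
    intro x
    apply Finset.card_le_card_of_injOn (pr 0)
    · intro v hv
      simp only [hSx, mem_coe, mem_filter] at hv
      exact mem_image_of_mem _ hv.1
    · intro v hv w hw h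
      simp only [hSx, coe_filter, Set.mem_setOf_eq] at hv hw
      exact eq_of_pr_eq h (hv.2.trans hw.2.symm)
  have hslicebc : ∀ x, (Sx x).card ≤ b x * c x := by
    intro x
    have : (Sx x).card ≤ (((Sx x).image (pr 1)) ×ˢ ((Sx x).image (pr 2))).card := by
      apply Finset.card_le_card_of_injOn (fun v => (pr 1 v, pr 2 v))
      · intro v hv
        simp only [mem_coe, mem_product]
        exact ⟨mem_image_of_mem _ (by simpa using hv), mem_image_of_mem _ (by simpa using hv)⟩
      · intro v hv w hw h
        simp only [Prod.mk.injEq] at h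
        funext j
        fin_cases j
        · have := congrFun h.2 0; simpa [pr, Function.update_of_ne] using this
        · have := congrFun h.2 1; simpa [pr, Function.update_of_ne] using this
        · have := congrFun h.1 2; simpa [pr, Function.update_of_ne] using this
      
    simpa [Finset.card_product] using this
  -- disjoint unions for b and c
  have hdisj : ∀ (j : Fin 3), j ≠ 0 → ∀ x ∈ (univ : Finset (Fin q)), ∀ y ∈ (univ : Finset (Fin q)),
      x ≠ y → Disjoint ((Sx x).image (pr j)) ((Sx y).image (pr j)) := by
    intro j hj x _ y _ hxy
    rw [Finset.disjoint_left]
    intro u hux huy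
    simp only [mem_image, hSx, mem_filter] at hux huy
    obtain ⟨v, ⟨_, hv0⟩, hvu⟩ := hux
    obtain ⟨w, ⟨_, hw0⟩, hwu⟩ := huy
    apply hxy
    have h1 : u 0 = v 0 := by rw [← hvu]; exact pr_apply_ne j 0 v (Ne.symm hj)
    have h2 : u 0 = w 0 := by rw [← hwu]; exact pr_apply_ne j 0 w (Ne.symm hj)
    rw [← hv0, ← h1, h2, hw0]
  have hsumj : ∀ (j : Fin 3), j ≠ 0 →
      ∑ x : Fin q, ((Sx x).image (pr j)).card ≤ (S.image (pr j)).card := by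
    intro j hj
    rw [← Finset.card_biUnion (hdisj j hj)]
    apply card_le_card
    intro u hu
    simp only [mem_biUnion] at hu
    obtain ⟨x, _, hx⟩ := hu
    simp only [mem_image, hSx, mem_filter] at hx ⊢
    obtain ⟨v, ⟨hv, _⟩, hvu⟩ := hx
    exact ⟨v, hv, hvu⟩
  have hbsum : ∑ x : Fin q, b x ≤ (S.image (pr 1)).card := hsumj 1 (by decide)
  have hcsum : ∑ x : Fin q, c x ≤ (S.image (pr 2)).card := hsumj 2 (by decide)
  -- real computation
  set A : Fin q → ℝ := fun x => ((Sx x).card : ℝ) with hA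
  have hA0 : ∀ x, 0 ≤ A x := fun x => Nat.cast_nonneg _
  have hP0' : (0:ℝ) ≤ (P0:ℝ) := Nat.cast_nonneg _
  have hAsum : (S.card : ℝ) = ∑ x : Fin q, A x := by
    rw [hcard]; push_cast; rfl
  have hAle : ∀ x, A x ≤ Real.sqrt P0 * (Real.sqrt (b x) * Real.sqrt (c x)) := by
    intro x
    have h1 : A x ≤ (P0:ℝ) := by
      show ((Sx x).card : ℝ) ≤ (P0:ℝ); exact_mod_cast hslice0 x
    have h2 : A x ≤ (b x : ℝ) * (c x : ℝ) := by
      show ((Sx x).card : ℝ) ≤ (b x : ℝ) * (c x : ℝ); exact_mod_cast hslicebc x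
    have h3 : A x * A x ≤ (P0:ℝ) * ((b x : ℝ) * (c x : ℝ)) :=
      mul_le_mul h1 h2 (hA0 x) hP0'
    calc A x = Real.sqrt (A x * A x) := (Real.sqrt_mul_self (hA0 x)).symm
      _ ≤ Real.sqrt ((P0:ℝ) * ((b x : ℝ) * (c x : ℝ))) := Real.sqrt_le_sqrt h3
      _ = Real.sqrt P0 * (Real.sqrt (b x) * Real.sqrt (c x)) := by
          rw [Real.sqrt_mul hP0', Real.sqrt_mul (Nat.cast_nonneg _)]
  set X : ℝ := ∑ x : Fin q, Real.sqrt (b x) * Real.sqrt (c x) with hX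
  have hX0 : 0 ≤ X := Finset.sum_nonneg fun x _ =>
    mul_nonneg (Real.sqrt_nonneg _) (Real.sqrt_nonneg _)
  have hSX : (S.card : ℝ) ≤ Real.sqrt P0 * X := by
    rw [hAsum, hX, Finset.mul_sum]
    exact Finset.sum_le_sum fun x _ => hAle x
  have hCS : X ^ 2 ≤ (∑ x : Fin q, (b x : ℝ)) * (∑ x : Fin q, (c x : ℝ)) := by
    have := Finset.sum_mul_sq_le_sq_mul_sq univ (fun x => Real.sqrt (b x))
      (fun x => Real.sqrt (c x))
    simpa [Real.sq_sqrt, Nat.cast_nonneg] using this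
  have hb1 : (∑ x : Fin q, (b x : ℝ)) ≤ ((S.image (pr 1)).card : ℝ) := by
    exact_mod_cast hbsum
  have hc1 : (∑ x : Fin q, (c x : ℝ)) ≤ ((S.image (pr 2)).card : ℝ) := by
    exact_mod_cast hcsum
  have hb0 : (0:ℝ) ≤ ∑ x : Fin q, (b x : ℝ) := Finset.sum_nonneg fun x _ => Nat.cast_nonneg _
  have hc0 : (0:ℝ) ≤ ∑ x : Fin q, (c x : ℝ) := Finset.sum_nonneg fun x _ => Nat.cast_nonneg _
  calc ((S.card : ℝ)) ^ 2 ≤ (Real.sqrt P0 * X) ^ 2 := by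
        apply pow_le_pow_left₀ (Nat.cast_nonneg _) hSX
    _ = (P0:ℝ) * X ^ 2 := by
        rw [mul_pow, Real.sq_sqrt hP0']
    _ ≤ (P0:ℝ) * (((S.image (pr 1)).card : ℝ) * ((S.image (pr 2)).card : ℝ)) := by
        apply mul_le_mul_of_nonneg_left _ hP0'
        calc X ^ 2 ≤ (∑ x : Fin q, (b x : ℝ)) * (∑ x : Fin q, (c x : ℝ)) := hCS
          _ ≤ ((S.image (pr 1)).card : ℝ) * ((S.image (pr 2)).card : ℝ) :=
              mul_le_mul hb1 hc1 hc0 (Nat.cast_nonneg _)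
    _ = ((S.image (pr 0)).card : ℝ) * ((S.image (pr 1)).card : ℝ) * ((S.image (pr 2)).card : ℝ) := by
        rw [hP0]; ring


set_option maxHeartbeats 1000000 in
/-- per-component edge bound via Loomis-Whitney: `|E| ≤ 3k - 3k^(2/3)`. -/
lemma edge_bound {q : ℕ} [NeZero q] (S : Finset (Fin 3 → Fin q)) (E : Finset (OEdge q 3))
    (hE : ∀ e ∈ E, e.1.1 ∈ S ∧ e.1.2 ∈ S) :
    (E.card : ℝ) ≤ 3 * (S.card : ℝ) - 3 * (S.card : ℝ) ^ ((2:ℝ)/3) := by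
  classical
  -- direction of an edge
  have hdir : ∀ e : OEdge q 3, ∃ i : Fin 3,
      ((e.1.2 i : ℤ) = (e.1.1 i : ℤ) + 1) ∧ ∀ j, j ≠ i → e.1.1 j = e.1.2 j := edge_struct
  set dir : OEdge q 3 → Fin 3 := fun e => Classical.choose (hdir e) with hdirdef
  have hdirspec : ∀ e : OEdge q 3, ((e.1.2 (dir e) : ℤ) = (e.1.1 (dir e) : ℤ) + 1) ∧
      ∀ j, j ≠ dir e → e.1.1 j = e.1.2 j := fun e => Classical.choose_spec (hdir e)
  have hsplit : E.card = ∑ i : Fin 3, (E.filter (fun e => dir e = i)).card :=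
    Finset.card_eq_sum_card_fiberwise (fun e _ => mem_univ (dir e))
  have hdcount : ∀ i : Fin 3,
      (E.filter (fun e => dir e = i)).card + (S.image (pr i)).card ≤ S.card := by
    intro i
    apply dir_count S (E.filter (fun e => dir e = i)) i (fun e => e.1.1) (fun e => e.1.2)
    · intro e he
      rw [mem_filter] at he
      obtain ⟨hd1, hd2⟩ := hdirspec e
      refine ⟨(hE e he.1).1, (hE e he.1).2, ?_, ?_⟩
      · rw [← he.2]; omega
      · rw [pr_eq_iff]
        intro j hj
        exact hd2 j (by rw [he.2]; exact hj)
    · intro e he e' he' hee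
      rw [mem_filter] at he he'
      obtain ⟨hd1, hd2⟩ := hdirspec e
      obtain ⟨hd1', hd2'⟩ := hdirspec e'
      apply Subtype.ext
      have h2 : e.1.2 = e'.1.2 := by
        funext j
        by_cases hj : j = i
        · rw [hj]
          apply Fin.ext
          have hee' : e.1.1 i = e'.1.1 i := by rw [hee]
          rw [he.2] at hd1; rw [he'.2] at hd1'
          have hv : ((e.1.1 i : ℕ) : ℤ) = ((e'.1.1 i : ℕ) : ℤ) := by rw [hee']
          omega
        · rw [← hd2 j (by rw [he.2]; exact hj), ← hd2' j (by rw [he'.2]; exact hj), hee]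
      exact Prod.ext hee h2
  -- sum the three direction bounds
  have hd0 := hdcount 0
  have hd1 := hdcount 1
  have hd2 := hdcount 2
  rw [Fin.sum_univ_three] at hsplit
  set L0 := (S.image (pr 0)).card with hL0
  set L1 := (S.image (pr 1)).card with hL1
  set L2 := (S.image (pr 2)).card with hL2
  have htotR : (E.card : ℝ) + ((L0 : ℝ) + (L1 : ℝ) + (L2 : ℝ)) ≤ 3 * (S.card : ℝ) := by
    have h : E.card + (L0 + L1 + L2) ≤ 3 * S.card := by omega
    exact_mod_cast h
  have hLW : ((S.card : ℝ)) ^ 2 ≤ (L0 : ℝ) * (L1 : ℝ) * (L2 : ℝ) := loomis_whitney S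
  have hAMGM : 3 * (S.card : ℝ) ^ ((2:ℝ)/3) ≤ (L0 : ℝ) + (L1 : ℝ) + (L2 : ℝ) := by
    have hk23 : (S.card : ℝ) ^ ((2:ℝ)/3) = (((S.card:ℝ)) ^ 2) ^ ((1:ℝ)/3) := by
      rw [← Real.rpow_natCast ((S.card : ℝ)) 2, ← Real.rpow_mul (Nat.cast_nonneg _)]
      norm_num
    have hmono : (((S.card:ℝ)) ^ 2) ^ ((1:ℝ)/3) ≤
        ((L0 : ℝ) * (L1 : ℝ) * (L2 : ℝ)) ^ ((1:ℝ)/3) :=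
      Real.rpow_le_rpow (sq_nonneg _) hLW (by norm_num)
    have hsplit2 : ((L0 : ℝ) * (L1 : ℝ) * (L2 : ℝ)) ^ ((1:ℝ)/3) =
        (L0 : ℝ) ^ ((1:ℝ)/3) * (L1 : ℝ) ^ ((1:ℝ)/3) * (L2 : ℝ) ^ ((1:ℝ)/3) := by
      rw [Real.mul_rpow (mul_nonneg (Nat.cast_nonneg _) (Nat.cast_nonneg _)) (Nat.cast_nonneg _),
        Real.mul_rpow (Nat.cast_nonneg _) (Nat.cast_nonneg _)]
    have hgm := Real.geom_mean_le_arith_mean3_weighted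
      (by norm_num : (0:ℝ) ≤ 1/3) (by norm_num : (0:ℝ) ≤ 1/3) (by norm_num : (0:ℝ) ≤ 1/3)
      (Nat.cast_nonneg L0) (Nat.cast_nonneg L1) (Nat.cast_nonneg L2)
      (by norm_num : (1:ℝ)/3 + 1/3 + 1/3 = 1)
    rw [hk23]
    rw [hsplit2] at hmono
    linarith [hmono, hgm]
  linarith [htotR, hAMGM]

/-- the edge relation generated by `Λ` -/
def erel (q d : ℕ) (Λ : Finset (OEdge q d)) (u v : Fin d → Fin q) : Prop :=
  ∃ e ∈ Λ, (e.1.1 = u ∧ e.1.2 = v) ∨ (e.1.1 = v ∧ e.1.2 = u)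

lemma edge_ne {q d : ℕ} (e : OEdge q d) : e.1.1 ≠ e.1.2 := by
  intro h
  have := e.2.2
  rw [h] at this
  exact lt_irrefl _ this

lemma wgrad_edge {q d : ℕ} {Λ : Finset (OEdge q d)} {x : (Fin d → Fin q) → ℝ}
    (hx : x ∈ Wgrad q d Λ) {e : OEdge q d} (he : e ∈ Λ) : x e.1.1 = x e.1.2 := by
  classical
  rw [Wgrad, Submodule.mem_iInf] at hx
  have h1 := hx e
  rw [Submodule.mem_iInf] at h1
  have h2 := h1 he
  rw [LinearMap.mem_ker, LinearMap.comp_apply] at h2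
  have h3 : ((grad q d).mulVecLin x) e = 0 := h2
  rw [Matrix.mulVecLin_apply, Matrix.mulVec, dotProduct] at h3
  have hne : e.1.1 ≠ e.1.2 := edge_ne e
  have hsum : ∀ v : Fin d → Fin q, grad q d e v * x v =
      (if v = e.1.2 then x e.1.2 else 0) + (if v = e.1.1 then -(x e.1.1) else 0) := by
    intro v
    by_cases h1 : v = e.1.2 <;> by_cases h2 : v = e.1.1
    · exact absurd (h2.symm.trans h1) hne
    · simp [grad, h1, h2, hne, Ne.symm hne]
    · simp [grad, h1, h2, hne, Ne.symm hne]
    · simp [grad, h1, h2, hne, Ne.symm hne]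
  rw [Finset.sum_congr rfl (fun v _ => hsum v), Finset.sum_add_distrib,
    Finset.sum_ite_eq' univ e.1.2 (fun v => x e.1.2),
    Finset.sum_ite_eq' univ e.1.1 (fun v => -(x e.1.1))] at h3
  simp at h3
  linarith
lemma wgrad_const {q d : ℕ} {Λ : Finset (OEdge q d)} {x : (Fin d → Fin q) → ℝ}
    (hx : x ∈ Wgrad q d Λ) : ∀ u v, Relation.EqvGen (erel q d Λ) u v → x u = x v := by
  intro u v h
  induction h with
  | rel u v huv =>
      obtain ⟨e, he, h⟩ := huv
      rcases h with ⟨h1, h2⟩ | ⟨h1, h2⟩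
      · rw [← h1, ← h2]; exact wgrad_edge hx he
      · rw [← h1, ← h2]; exact (wgrad_edge hx he).symm
  | refl u => rfl
  | symm u v _ ih => exact ih.symm
  | trans u v w _ _ ih1 ih2 => exact ih1.trans ih2

noncomputable def compSetoid (q d : ℕ) (Λ : Finset (OEdge q d)) : Setoid (Fin d → Fin q) :=
  Relation.EqvGen.setoid (erel q d Λ)

noncomputable instance (q d : ℕ) (Λ : Finset (OEdge q d)) :
    Fintype (Quotient (compSetoid q d Λ)) := by
  classical
  exact Quotient.fintype _

lemma finrank_W_le (q d : ℕ) (Λ : Finset (OEdge q d)) :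
    Module.finrank ℝ (Wgrad q d Λ) ≤ Fintype.card (Quotient (compSetoid q d Λ)) := by
  classical
  show Module.finrank ℝ (Wgrad q d Λ) ≤ Fintype.card (Quotient (compSetoid q d Λ))
  set s := compSetoid q d Λ with hs
  let L : Wgrad q d Λ →ₗ[ℝ] (Quotient s → ℝ) :=
    { toFun := fun x => Quotient.lift x.1 (fun u v huv => wgrad_const x.2 u v huv)
      map_add' := fun x y => by
        funext c
        induction c using Quotient.ind
        rfl
      map_smul' := fun r x => by
        funext c
        induction c using Quotient.ind
        rfl }
  have hinj : Function.Injective L := by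
    intro x y hxy
    apply Subtype.ext
    funext v
    exact congrFun hxy (Quotient.mk s v)
  have := LinearMap.finrank_le_finrank_of_injective hinj
  rwa [Module.finrank_fintype_fun_eq_card] at this

/-- 3D, known cosupport: if `m ≥ n − (1/3)(ℓ + (3ℓ²)^{1/3} + 2(ℓ/3)^{1/3} − 2)` with
`n = q³`, then `κ_∇(ℓ) ≤ m`, i.e. `m` measurements meet the known-cosupport uniqueness
criterion. -/
theorem stmt_12 (q : ℕ) (hq : 3 ≤ q) (ℓ : ℕ) (hl : 54 < ℓ) (hlp : ℓ ≤ 3 * q ^ 2 * (q - 1))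
    (m : ℕ)
    (hm : (m : ℝ) ≥ (q : ℝ) ^ 3 - (1 / 3) * ((ℓ : ℝ) + (3 * (ℓ : ℝ) ^ 2) ^ ((1 : ℝ) / 3) +
      2 * ((ℓ : ℝ) / 3) ^ ((1 : ℝ) / 3) - 2)) :
    kappaGrad q 3 ℓ ≤ m := by
  haveI : NeZero q := ⟨by omega⟩
  classical
  rw [kappaGrad]
  apply Finset.sup_le
  intro Λ hΛm
  rw [mem_filter] at hΛm
  have hcard : ℓ ≤ Λ.card := hΛm.2
  refine le_trans (finrank_W_le q 3 Λ) ?_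
  set s := compSetoid q 3 Λ with hs
  set k : Quotient s → ℕ :=
    fun c => ((univ : Finset (Fin 3 → Fin q)).filter (fun v => Quotient.mk s v = c)).card with hk
  set eN : Quotient s → ℕ :=
    fun c => (Λ.filter (fun e => Quotient.mk s e.1.1 = c)).card with heN
  have hn : (univ : Finset (Fin 3 → Fin q)).card = ∑ c : Quotient s, k c :=
    Finset.card_eq_sum_card_fiberwise (fun v _ => mem_univ _)
  have hnq : (univ : Finset (Fin 3 → Fin q)).card = q ^ 3 := by
    rw [Finset.card_univ, Fintype.card_fun]
    simp
  have hk1 : ∀ c : Quotient s, 1 ≤ k c := by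
    intro c
    induction c using Quotient.ind with
    | _ v => exact Finset.card_pos.2 ⟨v, mem_filter.2 ⟨mem_univ v, rfl⟩⟩
  have hΛsum : Λ.card = ∑ c : Quotient s, eN c :=
    Finset.card_eq_sum_card_fiberwise (fun e _ => mem_univ _)
  have hclass : ∀ c : Quotient s, (eN c : ℝ) ≤ Gfun (k c) := by
    intro c
    have hB := edge_bound ((univ : Finset (Fin 3 → Fin q)).filter (fun v => Quotient.mk s v = c))
      (Λ.filter (fun e => Quotient.mk s e.1.1 = c)) ?_
    · exact hB
    · intro e he
      rw [mem_filter] at he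
      constructor
      · rw [mem_filter]
        exact ⟨mem_univ _, he.2⟩
      · rw [mem_filter]
        refine ⟨mem_univ _, ?_⟩
        rw [← he.2]
        exact Quotient.sound (Relation.EqvGen.symm _ _
          (Relation.EqvGen.rel _ _ ⟨e, he.1, Or.inl ⟨rfl, rfl⟩⟩))
  set T : Finset (Quotient s) := univ.filter (fun c => 0 < eN c) with hT
  have hTsum : ∑ c ∈ T, eN c = ∑ c : Quotient s, eN c :=
    Finset.sum_filter_of_ne (fun c _ hc => Nat.pos_of_ne_zero hc)
  have hTne : T.Nonempty := by
    rw [Finset.nonempty_iff_ne_empty]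
    intro h
    rw [hT] at h
    have h0 : ∑ c ∈ T, eN c = 0 := by rw [hT, h]; simp
    rw [hTsum, ← hΛsum] at h0
    omega
  have hagg := Gfun_agg T hTne (fun c => (k c : ℝ)) (fun c => (eN c : ℝ))
    (fun c _ => by show (1:ℝ) ≤ ((k c : ℕ):ℝ); exact_mod_cast hk1 c) (fun c _ => hclass c)
  have hlT : (ℓ:ℝ) ≤ ∑ c ∈ T, (eN c : ℝ) := by
    have h1 : ℓ ≤ ∑ c ∈ T, eN c := by rw [hTsum, ← hΛsum]; exact hcard
    exact_mod_cast h1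
  set R : ℝ := ∑ c ∈ T, ((k c : ℝ) - 1) with hR
  have hR0 : 0 ≤ R := Finset.sum_nonneg fun c _ => by
    have h1 : (1:ℝ) ≤ (k c : ℝ) := by exact_mod_cast hk1 c
    linarith
  have hlG : (ℓ:ℝ) ≤ Gfun (R + 1) := le_trans hlT hagg
  have hcore := Gfun_core hl
  have hRF : (1/3) * ((ℓ:ℝ) + (3 * (ℓ:ℝ) ^ 2) ^ ((1:ℝ)/3) +
      2 * ((ℓ:ℝ) / 3) ^ ((1:ℝ)/3) - 2) < R + 1 := by
    by_contra hc
    push_neg at hc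
    have hmono := Gfun_mono (by linarith : (1:ℝ) ≤ R + 1) hc
    linarith
  -- count the classes
  have hsumk : ((q:ℝ)) ^ 3 = ∑ c : Quotient s, (k c : ℝ) := by
    have h1 : ((univ : Finset (Fin 3 → Fin q)).card : ℝ) = ∑ c : Quotient s, (k c : ℝ) := by
      rw [hn]; push_cast; rfl
    rw [← h1, hnq]; push_cast; ring
  have hRbound : R ≤ ∑ c : Quotient s, ((k c : ℝ) - 1) := by
    rw [hR]
    apply Finset.sum_le_sum_of_subset_of_nonneg (filter_subset _ _)
    intro c _ _
    have h1 : (1:ℝ) ≤ (k c : ℝ) := by exact_mod_cast hk1 c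
    linarith
  have hcardQ : (Fintype.card (Quotient s) : ℝ) =
      ∑ c : Quotient s, (k c : ℝ) - ∑ c : Quotient s, ((k c : ℝ) - 1) := by
    rw [← Finset.sum_sub_distrib]
    have h1 : ∑ c : Quotient s, ((k c:ℝ) - ((k c:ℝ) - 1)) = ∑ _c : Quotient s, (1:ℝ) :=
      Finset.sum_congr rfl (fun c _ => by ring)
    rw [h1, Finset.sum_const, Finset.card_univ, nsmul_eq_mul, mul_one]
  have hfinal : (Fintype.card (Quotient s) : ℝ) < (m:ℝ) + 1 := by
    rw [hcardQ]
    have := hm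
    nlinarith [hsumk, hRbound, hRF, hm]
  have hfinal' : Fintype.card (Quotient s) < m + 1 := by exact_mod_cast hfinal
  exact Nat.lt_succ_iff.mp hfinal'
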